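/- If a gate H is an induced subgraph of a graph G, then H is an induced subgraph of some atom of G in the clique-separator decomposition of G; in particular, no clique separator of G can disconnect the vertex set of H. -/

import Mathlib

/-- A maximal clique (a maximal complete vertex set) of a simple graph. -/
def IsMaxClique {V : Type} (G : SimpleGraph V) (s : Set V) : Prop :=
  G.IsClique s ∧ ∀ t : Set V, G.IsClique t → s ⊆ t → s = t

/-- The number of maximal cliques of a graph. -/
noncomputable def numMaxCliques {V : Type} (G : SimpleGraph V) : ℕ :=
  {s : Set V | IsMaxClique G s}.ncard

/-- The graph obtained from `G` and a chordless path on `l` new vertices by joining the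
first vertex of the path to every vertex of `A` and the last vertex to every vertex of `B`. -/
def joinPath {V : Type} (G : SimpleGraph V) (A B : Set V) (l : ℕ) :
    SimpleGraph (V ⊕ Fin l) where
  Adj x y :=
    match x, y with
    | Sum.inl a, Sum.inl b => G.Adj a b
    | Sum.inl a, Sum.inr i => (i.val = 0 ∧ a ∈ A) ∨ (i.val = l - 1 ∧ a ∈ B)
    | Sum.inr i, Sum.inl a => (i.val = 0 ∧ a ∈ A) ∨ (i.val = l - 1 ∧ a ∈ B)
    | Sum.inr i, Sum.inr j => i.val + 1 = j.val ∨ j.val + 1 = i.val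
  symm := by
    constructor
    rintro (a | i) (b | j) h <;> simp_all <;> tauto
  loopless := by
    constructor
    rintro (a | i) h
    · exact G.loopless.irrefl a h
    · rcases h with h | h <;> omega

/-- Gates, defined recursively (up to isomorphism): chordless cycles `Cₙ`, `n ≥ 4`, are
gates, and joining a new chordless path to two disjoint maximal cliques of a gate
yields a gate. -/
inductive IsGate : {V : Type} → SimpleGraph V → Prop
  | cycle (n : ℕ) (hn : 4 ≤ n) : IsGate (SimpleGraph.cycleGraph n)
  | extend {V : Type} (G : SimpleGraph V) (C C' : Set V) (l : ℕ)
      (hG : IsGate G) (hC : IsMaxClique G C) (hC' : IsMaxClique G C')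
      (hdisj : Disjoint C C') (hl : 2 ≤ l) : IsGate (joinPath G C C' l)
  | iso {V W : Type} (G : SimpleGraph V) (H : SimpleGraph W)
      (hG : IsGate G) (e : G ≃g H) : IsGate H

/-- An EPT representation of `G`: a family of paths in a host tree such that two distinct
vertices are adjacent iff their paths share an edge of the tree. -/
structure EPTRep {V : Type} (G : SimpleGraph V) where
  VT : Type
  T : SimpleGraph VT
  tree : T.IsTree
  src : V → VT
  tgt : V → VT
  walk : (v : V) → T.Walk (src v) (tgt v)
  isPath : ∀ v, (walk v).IsPath
  adj_iff : ∀ v w : V, v ≠ w →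
    (G.Adj v w ↔ ∃ e : Sym2 VT, e ∈ (walk v).edges ∧ e ∈ (walk w).edges)

/-- The edge set of the path representing `v`. -/
def EPTRep.edges {V : Type} {G : SimpleGraph V} (R : EPTRep G) (v : V) :
    Set (Sym2 R.VT) := {e | e ∈ (R.walk v).edges}

/-- The representation is Helly: every nonempty pairwise edge-intersecting subfamily of
paths has a common edge. -/
def EPTRep.Helly {V : Type} {G : SimpleGraph V} (R : EPTRep G) : Prop :=
  ∀ S : Set V, S.Nonempty →
    (∀ u ∈ S, ∀ v ∈ S, (R.edges u ∩ R.edges v).Nonempty) →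
    (⋂ v ∈ S, R.edges v).Nonempty

/-- The host tree has maximum degree at most `h`. -/
def EPTRep.maxDegLE {V : Type} {G : SimpleGraph V} (R : EPTRep G) (h : ℕ) : Prop :=
  ∀ x : R.VT, (R.T.neighborSet x).ncard ≤ h

/-- The class `[h,2,2]`. -/
def InEPTClass (h : ℕ) {V : Type} (G : SimpleGraph V) : Prop :=
  ∃ R : EPTRep G, R.maxDegLE h

/-- Helly EPT graphs. -/
def IsHellyEPT {V : Type} (G : SimpleGraph V) : Prop :=
  ∃ R : EPTRep G, R.Helly

/-- The class Helly `[h,2,2]`. -/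
def InHellyClass (h : ℕ) {V : Type} (G : SimpleGraph V) : Prop :=
  ∃ R : EPTRep G, R.Helly ∧ R.maxDegLE h

/-- Three paths of the representation form a claw at some claw of the host tree. -/
def EPTRep.FormsClaw {V : Type} {G : SimpleGraph V} (R : EPTRep G) (a b c : V) : Prop :=
  ∃ q x y z : R.VT, R.T.Adj q x ∧ R.T.Adj q y ∧ R.T.Adj q z ∧
    x ≠ y ∧ y ≠ z ∧ x ≠ z ∧
    s(q, x) ∈ R.edges a ∧ s(q, y) ∈ R.edges a ∧
    s(q, y) ∈ R.edges b ∧ s(q, z) ∈ R.edges b ∧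
    s(q, x) ∈ R.edges c ∧ s(q, z) ∈ R.edges c

/-- A multipie of size `k` whose paths are those representing the vertices in `S`. -/
def IsMultipie {V : Type} {G : SimpleGraph V} (R : EPTRep G) (k : ℕ) (S : Set V) : Prop :=
  ∃ (q : R.VT) (qi : Fin k → R.VT), Function.Injective qi ∧
    (∀ i, R.T.Adj q (qi i)) ∧
    (∀ v ∈ S, {i : Fin k | qi i ∈ (R.walk v).support}.ncard = 2) ∧
    (∀ u ∈ S, ∀ v ∈ S, ∀ i j : Fin k, i ≠ j →
      qi i ∈ (R.walk u).support → qi j ∈ (R.walk u).support →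
      qi i ∈ (R.walk v).support → qi j ∈ (R.walk v).support → u = v) ∧
    (∀ i, 2 ≤ {v ∈ S | s(q, qi i) ∈ R.edges v}.ncard) ∧
    (∀ a ∈ S, ∀ b ∈ S, ∀ c ∈ S, ¬ R.FormsClaw a b c)

/-- The next index around a cycle. -/
def finNext {k : ℕ} (hk : 0 < k) (i : Fin k) : Fin k :=
  ⟨(i.val + 1) % k, Nat.mod_lt _ hk⟩

/-- `G` has a clique separator: a complete vertex set whose removal disconnects the graph. -/
def HasCliqueSep {V : Type} (G : SimpleGraph V) : Prop :=
  ∃ C : Set V, G.IsClique C ∧ ¬ (G.induce Cᶜ).Preconnected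

/-- An atom of `G`: a maximal vertex subset inducing a connected subgraph without clique
separators. -/
def IsAtomOf {V : Type} (G : SimpleGraph V) (A : Set V) : Prop :=
  (G.induce A).Connected ∧ ¬ HasCliqueSep (G.induce A) ∧
    ∀ B : Set V, A ⊆ B → (G.induce B).Connected → ¬ HasCliqueSep (G.induce B) → A = B

/-! ### Auxiliary development -/

open SimpleGraph in
/-- Strong non-separability: removing any clique leaves the graph preconnected. -/
def StrongConn {V : Type} (G : SimpleGraph V) : Prop :=
  ∀ K : Set V, G.IsClique K → (G.induce Kᶜ).Preconnected

lemma strongConn_iso {V W : Type} {G : SimpleGraph V} {H : SimpleGraph W}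
    (e : G ≃g H) (hG : StrongConn G) : StrongConn H := by
  intro K hK
  have hK0 : G.IsClique (⇑e ⁻¹' K) := by
    intro a ha b hb hab
    exact e.map_rel_iff.mp (hK ha hb (fun h => hab (e.injective h)))
  let F : G.induce (⇑e ⁻¹' K)ᶜ →g H.induce Kᶜ :=
    ⟨fun x => ⟨e x.1, x.2⟩, fun h => e.map_rel_iff.mpr h⟩
  intro u v
  have hu : e.symm ↑u ∈ (⇑e ⁻¹' K)ᶜ := by
    simp only [Set.mem_compl_iff, Set.mem_preimage, e.apply_symm_apply]
    exact u.2
  have hv : e.symm ↑v ∈ (⇑e ⁻¹' K)ᶜ := by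
    simp only [Set.mem_compl_iff, Set.mem_preimage, e.apply_symm_apply]
    exact v.2
  have hr := (hG _ hK0 ⟨e.symm ↑u, hu⟩ ⟨e.symm ↑v, hv⟩).map F
  have h1 : F ⟨e.symm ↑u, hu⟩ = u := Subtype.ext (e.apply_symm_apply _)
  have h2 : F ⟨e.symm ↑v, hv⟩ = v := Subtype.ext (e.apply_symm_apply _)
  rwa [h1, h2] at hr

lemma gate_nonempty {V : Type} {G : SimpleGraph V} (h : IsGate G) : Nonempty V := by
  induction h with
  | cycle n hn => exact ⟨⟨0, by omega⟩⟩
  | extend G C C' l hG hC hC' hdisj hl ih => exact ⟨Sum.inr ⟨0, by omega⟩⟩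
  | iso G H hG e ih => exact ⟨e ih.some⟩

lemma maxClique_nonempty {V : Type} [hne : Nonempty V] {G : SimpleGraph V} {C : Set V}
    (hC : IsMaxClique G C) : C.Nonempty := by
  by_contra h
  rw [Set.not_nonempty_iff_eq_empty] at h
  obtain ⟨v⟩ := hne
  have := hC.2 {v} (SimpleGraph.isClique_singleton v) (by simp [h])
  rw [h] at this
  exact Set.singleton_ne_empty v this.symm

lemma clique_preimage {V W : Type} {G : SimpleGraph V} {H : SimpleGraph W} (f : H ↪g G)
    {C : Set V} (hC : G.IsClique C) : H.IsClique (⇑f ⁻¹' C) := by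
  intro a ha b hb hab
  exact f.map_adj_iff.mp (hC ha hb (fun h => hab (f.injective h)))

lemma StrongConn.preconnected {V : Type} {G : SimpleGraph V} (h : StrongConn G) :
    G.Preconnected := by
  intro u v
  have hr := h ∅ SimpleGraph.isClique_empty ⟨u, by simp⟩ ⟨v, by simp⟩
  let F : G.induce (∅ : Set V)ᶜ →g G := (SimpleGraph.Embedding.induce _).toHom
  exact hr.map F

lemma StrongConn.noCliqueSep {V : Type} {G : SimpleGraph V} (h : StrongConn G) :
    ¬ HasCliqueSep G := by
  rintro ⟨C, h1, h2⟩
  exact h2 (h C h1)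

/-- The isomorphism from `H` onto the subgraph of `G` induced by the range of an embedding. -/
noncomputable def embIsoRange {V W : Type} {G : SimpleGraph V} {H : SimpleGraph W}
    (f : H ↪g G) : H ≃g G.induce (Set.range ⇑f) where
  toEquiv := Equiv.ofInjective ⇑f f.injective
  map_rel_iff' := f.map_adj_iff

section Cycle

open SimpleGraph
open scoped Fin.NatCast Fin.CommRing

lemma adj_cycle_succ {m : ℕ} (u : Fin (m + 2)) : (cycleGraph (m + 2)).Adj u (u + 1) := by
  rw [cycleGraph_adj]
  right
  exact add_sub_cancel_left u 1

lemma cycle_strong {n : ℕ} (hn : 4 ≤ n) : StrongConn (SimpleGraph.cycleGraph n) := by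
  obtain ⟨m, rfl⟩ : ∃ m, n = m + 2 := ⟨n - 2, by omega⟩
  have hm : 2 ≤ m := by omega
  intro K hK
  have hone : (1 : Fin (m + 2)).val = 1 := Fin.val_one _
  -- step 0: basic adjacency fact
  have hadjK : ∀ x ∈ K, ∀ y ∈ K, x ≠ y → y = x + 1 ∨ x = y + 1 := by
    intro x hx y hy hxy
    rcases cycleGraph_adj.mp (hK hx hy hxy) with h | h
    · right; rw [sub_eq_iff_eq_add] at h; rw [h]; ring
    · left; rw [sub_eq_iff_eq_add] at h; rw [h]; ring
  -- step 1: K is contained in {a, a+1} for some a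
  have claim1 : ∃ a : Fin (m + 2), ∀ x ∈ K, x = a ∨ x = a + 1 := by
    by_cases hKe : ∀ x, x ∉ K
    · exact ⟨0, fun x hx => absurd hx (hKe x)⟩
    push_neg at hKe
    obtain ⟨x, hx⟩ := hKe
    by_cases h2 : ∀ y ∈ K, y = x
    · exact ⟨x, fun z hz => Or.inl (h2 z hz)⟩
    push_neg at h2
    obtain ⟨y, hy, hyx⟩ := h2
    have key : ∀ a : Fin (m + 2), a ∈ K → a + 1 ∈ K → ∀ z ∈ K, z = a ∨ z = a + 1 := by
      intro a ha hb z hz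
      by_contra hcon
      push_neg at hcon
      obtain ⟨hza, hzb⟩ := hcon
      have h1 : z = a + 1 ∨ a = z + 1 := hadjK a ha z hz (Ne.symm hza)
      have h2' : z = (a + 1) + 1 ∨ (a + 1) = z + 1 := hadjK (a+1) hb z hz (Ne.symm hzb)
      have hz1 : a = z + 1 := by
        rcases h1 with h | h
        · exact absurd h hzb
        · exact h
      have hz2 : z = a + 1 + 1 := by
        rcases h2' with h | h
        · exact h
        · exfalso; exact hza (add_right_cancel h).symm
      have hcyc : a + 1 + 1 + 1 = a := by
        rw [← hz2, ← hz1]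
      have h30 : (1 + 1 + 1 : Fin (m + 2)) = 0 := by
        apply add_left_cancel (a := a)
        rw [add_zero, ← add_assoc, ← add_assoc]
        exact hcyc
      have h3' : ((3 : ℕ) : Fin (m + 2)) = 0 := by
        rw [← h30]; push_cast; ring
      rw [Fin.natCast_eq_zero] at h3'
      have := Nat.le_of_dvd (by omega) h3'
      omega
    rcases hadjK x hx y hy (Ne.symm hyx) with h | h
    · exact ⟨x, key x hx (h ▸ hy)⟩
    · exact ⟨y, key y hy (h ▸ hx)⟩
  obtain ⟨a, ha⟩ := claim1
  -- step 2: vertices of the form a + k, 2 ≤ k ≤ m+1, are alive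
  have claim2 : ∀ k : ℕ, 2 ≤ k → k ≤ m + 1 → a + (k : Fin (m + 2)) ∈ Kᶜ := by
    intro k hk2 hkm hmem
    have hkval : ((k : Fin (m + 2))).val = k := Fin.val_cast_of_lt (by omega)
    rcases ha _ hmem with h | h
    · have h0 : (k : Fin (m + 2)) = 0 := by
        apply add_left_cancel (a := a)
        rw [add_zero]; exact h
      rw [Fin.ext_iff, hkval] at h0
      simp at h0; omega
    · have h0 : (k : Fin (m + 2)) = 1 := add_left_cancel h
      rw [Fin.ext_iff, hkval, hone] at h0
      omega
  -- step 3: chain reachability among a + k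
  have claim3 : ∀ (k : ℕ) (hk2 : 2 ≤ k) (hkm : k ≤ m + 1),
      ((cycleGraph (m+2)).induce Kᶜ).Reachable
        ⟨a + ((2 : ℕ) : Fin (m + 2)), claim2 2 le_rfl (by omega)⟩
        ⟨a + (k : Fin (m + 2)), claim2 k hk2 hkm⟩ := by
    intro k hk2
    induction k, hk2 using Nat.le_induction with
    | base => intro _; exact SimpleGraph.Reachable.refl _
    | succ k hk ih =>
      intro hk1
      refine (ih (by omega)).trans (SimpleGraph.Adj.reachable ?_)
      show (cycleGraph (m+2)).Adj (a + (k : Fin (m+2))) (a + ((k+1 : ℕ) : Fin (m+2)))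
      have hcast : ((k + 1 : ℕ) : Fin (m + 2)) = (k : Fin (m + 2)) + 1 := by push_cast; ring
      rw [hcast, ← add_assoc]
      exact adj_cycle_succ _
  -- step 4: every live vertex reaches the hub a + 2
  have claim4 : ∀ (u : Fin (m + 2)) (hu : u ∈ Kᶜ),
      ((cycleGraph (m+2)).induce Kᶜ).Reachable ⟨u, hu⟩
        ⟨a + ((2 : ℕ) : Fin (m + 2)), claim2 2 le_rfl (by omega)⟩ := by
    intro u hu
    by_cases hua : u = a
    · -- a is adjacent to a + (m+1)
      have hprev : a + ((m + 1 : ℕ) : Fin (m + 2)) ∈ Kᶜ := claim2 (m+1) (by omega) le_rfl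
      have hadj : (cycleGraph (m+2)).Adj (a + ((m + 1 : ℕ) : Fin (m + 2))) u := by
        rw [hua]
        have hz : ((m + 1 : ℕ) : Fin (m + 2)) + 1 = 0 := by
          have h2 : (((m + 2) : ℕ) : Fin (m+2)) = 0 := Fin.natCast_self (m+2)
          rw [← h2]; push_cast; ring
        have hstep := adj_cycle_succ (a + ((m + 1 : ℕ) : Fin (m + 2)))
        rwa [add_assoc, hz, add_zero] at hstep
      refine (SimpleGraph.Adj.reachable ?_).trans ((claim3 (m+1) (by omega) le_rfl).symm)
      show (cycleGraph (m+2)).Adj u (a + ((m + 1 : ℕ) : Fin (m + 2)))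
      exact hadj.symm
    by_cases hub : u = a + 1
    · refine SimpleGraph.Adj.reachable ?_
      show (cycleGraph (m+2)).Adj u (a + ((2 : ℕ) : Fin (m + 2)))
      have h2 : a + ((2 : ℕ) : Fin (m + 2)) = (a + 1) + 1 := by push_cast; ring
      rw [hub, h2]
      exact adj_cycle_succ _
    · -- u = a + k with 2 ≤ k ≤ m + 1
      set k : ℕ := (u - a).val with hk
      have hk0 : k ≠ 0 := by
        intro h
        apply hua
        have h' : u - a = 0 := by rw [Fin.ext_iff, ← hk, h]; rfl
        rw [sub_eq_zero] at h'; exact h'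
      have hk1 : k ≠ 1 := by
        intro h
        apply hub
        have h' : u - a = 1 := by rw [Fin.ext_iff, ← hk, h, hone]
        rw [sub_eq_iff_eq_add] at h'
        rw [h']; ring
      have hklt : k < m + 2 := (u - a).isLt
      have hueq : u = a + ((k : ℕ) : Fin (m + 2)) := by
        rw [hk, Fin.cast_val_eq_self]; ring
      have hu' : a + ((k : ℕ) : Fin (m + 2)) ∈ Kᶜ := hueq ▸ hu
      have hstep : ((cycleGraph (m+2)).induce Kᶜ).Reachable ⟨u, hu⟩
          ⟨a + ((k : ℕ) : Fin (m+2)), hu'⟩ := by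
        have heq : (⟨u, hu⟩ : ↑Kᶜ) = ⟨a + ((k : ℕ) : Fin (m+2)), hu'⟩ := Subtype.ext hueq
        rw [heq]
      exact hstep.trans (claim3 k (by omega) (by omega)).symm
  intro u v
  exact (claim4 ↑u u.2).trans (claim4 ↑v v.2).symm

end Cycle

section JoinPath

open SimpleGraph

variable {V : Type} (G : SimpleGraph V) (C C' : Set V) (l : ℕ)

lemma joinPath_adj_inl_inl {a b : V} :
    (joinPath G C C' l).Adj (Sum.inl a) (Sum.inl b) ↔ G.Adj a b := Iff.rfl

lemma joinPath_adj_inl_inr {a : V} {i : Fin l} :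
    (joinPath G C C' l).Adj (Sum.inl a) (Sum.inr i) ↔
      (i.val = 0 ∧ a ∈ C) ∨ (i.val = l - 1 ∧ a ∈ C') := Iff.rfl

lemma joinPath_adj_inr_inr {i j : Fin l} :
    (joinPath G C C' l).Adj (Sum.inr i) (Sum.inr j) ↔
      i.val + 1 = j.val ∨ j.val + 1 = i.val := Iff.rfl

lemma joinPath_lift (K : Set (V ⊕ Fin l))
    (hpre : (G.induce {a : V | Sum.inl a ∈ K}ᶜ).Preconnected)
    (u v : V) (hu : Sum.inl u ∈ Kᶜ) (hv : Sum.inl v ∈ Kᶜ) :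
    ((joinPath G C C' l).induce Kᶜ).Reachable ⟨Sum.inl u, hu⟩ ⟨Sum.inl v, hv⟩ := by
  let F : (G.induce {a : V | Sum.inl a ∈ K}ᶜ) →g ((joinPath G C C' l).induce Kᶜ) :=
    ⟨fun x => ⟨Sum.inl x.1, x.2⟩, fun h => h⟩
  exact (hpre ⟨u, hu⟩ ⟨v, hv⟩).map F

lemma joinPath_chain (K : Set (V ⊕ Fin l)) :
    ∀ (d : ℕ) (i j : Fin l), i.val + d = j.val →
    (∀ m : Fin l, i.val ≤ m.val → m.val ≤ j.val → Sum.inr m ∈ Kᶜ) →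
    ∀ (hi : Sum.inr i ∈ Kᶜ) (hj : Sum.inr j ∈ Kᶜ),
    ((joinPath G C C' l).induce Kᶜ).Reachable ⟨Sum.inr i, hi⟩ ⟨Sum.inr j, hj⟩ := by
  intro d
  induction d with
  | zero =>
    intro i j hij hall hi hj
    have : i = j := Fin.ext (by omega)
    subst this
    exact SimpleGraph.Reachable.refl _
  | succ d ih =>
    intro i j hij hall hi hj
    have hj'lt : i.val + d < l := by omega
    have hj'K : Sum.inr (⟨i.val + d, hj'lt⟩ : Fin l) ∈ Kᶜ :=
      hall ⟨i.val + d, hj'lt⟩ (Nat.le_add_right _ _) (show i.val + d ≤ j.val by omega)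
    refine (ih i ⟨i.val + d, hj'lt⟩ rfl
      (fun m h1 h2 => hall m h1 (le_trans h2 (show i.val + d ≤ j.val by omega)))
      hi hj'K).trans (SimpleGraph.Adj.reachable ?_)
    show (joinPath G C C' l).Adj (Sum.inr ⟨i.val + d, hj'lt⟩) (Sum.inr j)
    exact Or.inl (show i.val + d + 1 = j.val by omega)

lemma joinPath_strong (hV : Nonempty V) (hsc : StrongConn G)
    (hC : IsMaxClique G C) (hC' : IsMaxClique G C')
    (hdisj : Disjoint C C') (hl : 2 ≤ l) : StrongConn (joinPath G C C' l) := by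
  intro K hK
  set Kg : Set V := {a | Sum.inl a ∈ K} with hKgdef
  have hKg : G.IsClique Kg := by
    intro a ha b hb hab
    exact hK ha hb (fun h => hab (Sum.inl.inj h))
  have hGpre : (G.induce Kgᶜ).Preconnected := hsc Kg hKg
  have hCne : C.Nonempty := maxClique_nonempty hC
  have hC'ne : C'.Nonempty := maxClique_nonempty hC'
  have hfirst : (0 : ℕ) < l := by omega
  have hlast : l - 1 < l := by omega
  suffices h : ∃ z : ↑Kᶜ, ∀ w : ↑Kᶜ, ((joinPath G C C' l).induce Kᶜ).Reachable w z by
    obtain ⟨z, hz⟩ := h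
    intro u v
    exact (hz u).trans (hz v).symm
  by_cases hA : ∀ i : Fin l, Sum.inr i ∈ Kᶜ
  · -- no path vertex is removed
    by_cases hCK : C ⊆ Kg
    · -- C = Kg, so C' is untouched; hub is a vertex of C'
      have hCeq : C = Kg := hC.2 Kg hKg hCK
      obtain ⟨c', hc'⟩ := hC'ne
      have hc'K : Sum.inl c' ∈ Kᶜ := fun h =>
        Set.disjoint_left.mp hdisj (hCeq ▸ (h : c' ∈ Kg)) hc'
      refine ⟨⟨Sum.inl c', hc'K⟩, ?_⟩
      rintro ⟨(a | i), hw⟩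
      · exact joinPath_lift G C C' l K hGpre a c' hw hc'K
      · have hchain := joinPath_chain G C C' l K (l - 1 - i.val) i ⟨l - 1, hlast⟩
          (show i.val + (l - 1 - i.val) = l - 1 by omega) (fun m _ _ => hA m) (hA i) (hA _)
        refine hchain.trans (SimpleGraph.Adj.reachable ?_)
        show (joinPath G C C' l).Adj (Sum.inr ⟨l - 1, hlast⟩) (Sum.inl c')
        exact Or.inr ⟨rfl, hc'⟩
    · -- some c ∈ C survives; hub is c
      obtain ⟨c, hcC, hcK'⟩ := Set.not_subset.mp hCK
      have hcK : Sum.inl c ∈ Kᶜ := hcK'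
      refine ⟨⟨Sum.inl c, hcK⟩, ?_⟩
      rintro ⟨(a | i), hw⟩
      · exact joinPath_lift G C C' l K hGpre a c hw hcK
      · have hchain := joinPath_chain G C C' l K i.val ⟨0, hfirst⟩ i
          (show 0 + i.val = i.val by omega) (fun m _ _ => hA m) (hA _) (hA i)
        refine hchain.symm.trans (SimpleGraph.Adj.reachable ?_)
        show (joinPath G C C' l).Adj (Sum.inr ⟨0, hfirst⟩) (Sum.inl c)
        exact Or.inl ⟨rfl, hcC⟩
  · push_neg at hA
    obtain ⟨i₀, hi₀⟩ := hA
    rw [Set.notMem_compl_iff] at hi₀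
    by_cases hB : ∀ a : V, Sum.inl a ∈ Kᶜ
    · -- only path vertices removed
      obtain ⟨c, hcC⟩ := hCne
      obtain ⟨c', hc'C⟩ := hC'ne
      refine ⟨⟨Sum.inl c, hB c⟩, ?_⟩
      rintro ⟨(a | j), hw⟩
      · exact joinPath_lift G C C' l K hGpre a c hw (hB c)
      · have claim : (∀ m : Fin l, m.val ≤ j.val → Sum.inr m ∈ Kᶜ) ∨
            (∀ m : Fin l, j.val ≤ m.val → Sum.inr m ∈ Kᶜ) := by
          by_contra hcon
          push_neg at hcon
          obtain ⟨⟨m₁, hm₁le, hm₁⟩, ⟨m₂, hm₂le, hm₂⟩⟩ := hcon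
          rw [Set.notMem_compl_iff] at hm₁ hm₂
          have hm₁j : m₁.val ≠ j.val := fun h => hw (by rwa [show m₁ = j from Fin.ext h] at hm₁)
          have hm₂j : m₂.val ≠ j.val := fun h => hw (by rwa [show m₂ = j from Fin.ext h] at hm₂)
          have hne : m₁ ≠ m₂ := by
            intro h
            apply hm₁j
            have := congrArg Fin.val h
            omega
          have hadj := hK hm₁ hm₂ (fun h => hne (Sum.inr.inj h))
          rw [joinPath_adj_inr_inr] at hadj
          omega
        rcases claim with h | h
        · have hchain := joinPath_chain G C C' l K j.val ⟨0, hfirst⟩ j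
            (show 0 + j.val = j.val by omega) (fun m _ hm => h m hm)
            (h _ (Nat.zero_le _)) hw
          refine hchain.symm.trans (SimpleGraph.Adj.reachable ?_)
          show (joinPath G C C' l).Adj (Sum.inr ⟨0, hfirst⟩) (Sum.inl c)
          exact Or.inl ⟨rfl, hcC⟩
        · have hchain := joinPath_chain G C C' l K (l - 1 - j.val) j ⟨l - 1, hlast⟩
            (show j.val + (l - 1 - j.val) = l - 1 by omega) (fun m hm _ => h m hm)
            hw (h _ (show j.val ≤ l - 1 by omega))
          refine hchain.trans ((SimpleGraph.Adj.reachable ?_).trans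
            (joinPath_lift G C C' l K hGpre c' c (hB c') (hB c)))
          show (joinPath G C C' l).Adj (Sum.inr ⟨l - 1, hlast⟩) (Sum.inl c')
          exact Or.inr ⟨rfl, hc'C⟩
    · push_neg at hB
      obtain ⟨a₀, ha₀⟩ := hB
      rw [Set.notMem_compl_iff] at ha₀
      have hadj₀ := hK ha₀ hi₀ (by simp)
      rw [joinPath_adj_inl_inr] at hadj₀
      rcases hadj₀ with ⟨h0, ha₀C⟩ | ⟨hL, ha₀C'⟩
      · -- K ∩ path = {position 0}, Kg ⊆ C; hub is c' ∈ C'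
        have hKp : ∀ j : Fin l, Sum.inr j ∈ K → j.val = 0 := by
          intro j hj
          by_contra hj0
          have hne : j ≠ i₀ := fun h => hj0 (h ▸ h0)
          have h1 := hK hj hi₀ (fun h => hne (Sum.inr.inj h))
          rw [joinPath_adj_inr_inr] at h1
          have hjval : j.val = 1 := by omega
          have h2 := hK ha₀ hj (by simp)
          rw [joinPath_adj_inl_inr] at h2
          rcases h2 with ⟨h, _⟩ | ⟨h, hmem⟩
          · omega
          · exact Set.disjoint_left.mp hdisj ha₀C hmem
        have hKgC : Kg ⊆ C := by
          intro a haa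
          have h2 := hK haa hi₀ (by simp)
          rw [joinPath_adj_inl_inr] at h2
          rcases h2 with ⟨_, h⟩ | ⟨h, _⟩
          · exact h
          · omega
        obtain ⟨c', hc'⟩ := hC'ne
        have hc'alive : Sum.inl c' ∈ Kᶜ := fun h =>
          Set.disjoint_left.mp hdisj (hKgC h) hc'
        refine ⟨⟨Sum.inl c', hc'alive⟩, ?_⟩
        rintro ⟨(a | j), hw⟩
        · exact joinPath_lift G C C' l K hGpre a c' hw hc'alive
        · have hj0 : j.val ≠ 0 := by
            intro h
            exact hw (by rwa [show j = i₀ from Fin.ext (by omega)])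
          have halive : ∀ m : Fin l, j.val ≤ m.val → Sum.inr m ∈ Kᶜ := by
            intro m hm hmem
            have := hKp m hmem
            omega
          have hchain := joinPath_chain G C C' l K (l - 1 - j.val) j ⟨l - 1, hlast⟩
            (show j.val + (l - 1 - j.val) = l - 1 by omega) (fun m hm _ => halive m hm)
            hw (halive _ (show j.val ≤ l - 1 by omega))
          refine hchain.trans (SimpleGraph.Adj.reachable ?_)
          show (joinPath G C C' l).Adj (Sum.inr ⟨l - 1, hlast⟩) (Sum.inl c')
          exact Or.inr ⟨rfl, hc'⟩
      · -- K ∩ path = {position l-1}, Kg ⊆ C'; hub is c ∈ C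
        have hKp : ∀ j : Fin l, Sum.inr j ∈ K → j.val = l - 1 := by
          intro j hj
          by_contra hj0
          have hne : j ≠ i₀ := fun h => hj0 (h ▸ hL)
          have h1 := hK hj hi₀ (fun h => hne (Sum.inr.inj h))
          rw [joinPath_adj_inr_inr] at h1
          have hjval : j.val = l - 2 := by omega
          have h2 := hK ha₀ hj (by simp)
          rw [joinPath_adj_inl_inr] at h2
          rcases h2 with ⟨h, hmem⟩ | ⟨h, _⟩
          · exact Set.disjoint_left.mp hdisj hmem ha₀C'
          · omega
        have hKgC' : Kg ⊆ C' := by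
          intro a haa
          have h2 := hK haa hi₀ (by simp)
          rw [joinPath_adj_inl_inr] at h2
          rcases h2 with ⟨h, _⟩ | ⟨_, h⟩
          · omega
          · exact h
        obtain ⟨c, hc⟩ := hCne
        have hcalive : Sum.inl c ∈ Kᶜ := fun h =>
          Set.disjoint_left.mp hdisj hc (hKgC' h)
        refine ⟨⟨Sum.inl c, hcalive⟩, ?_⟩
        rintro ⟨(a | j), hw⟩
        · exact joinPath_lift G C C' l K hGpre a c hw hcalive
        · have hjL : j.val ≠ l - 1 := by
            intro h
            exact hw (by rwa [show j = i₀ from Fin.ext (by omega)])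
          have halive : ∀ m : Fin l, m.val ≤ j.val → Sum.inr m ∈ Kᶜ := by
            intro m hm hmem
            have := hKp m hmem
            omega
          have hchain := joinPath_chain G C C' l K j.val ⟨0, hfirst⟩ j
            (show 0 + j.val = j.val by omega) (fun m _ hm => halive m hm)
            (halive _ (Nat.zero_le _)) hw
          refine hchain.symm.trans (SimpleGraph.Adj.reachable ?_)
          show (joinPath G C C' l).Adj (Sum.inr ⟨0, hfirst⟩) (Sum.inl c)
          exact Or.inl ⟨rfl, hc⟩

end JoinPath

lemma gate_strong {W : Type} {H : SimpleGraph W} (h : IsGate H) : StrongConn H := by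
  induction h with
  | cycle n hn => exact cycle_strong hn
  | extend G C C' l hG hC hC' hdisj hl ih =>
    exact joinPath_strong G C C' l (gate_nonempty hG) ih hC hC' hdisj hl
  | iso G H hG e ih => exact strongConn_iso e ih

theorem stmt14 {V W : Type} [Finite V] (G : SimpleGraph V) (H : SimpleGraph W)
    (hH : IsGate H) (f : H ↪g G) :
    (∃ A : Set V, IsAtomOf G A ∧ Set.range ⇑f ⊆ A) ∧
    ∀ C : Set V, G.IsClique C →
      ∀ u v : ↑Cᶜ, ↑u ∈ Set.range ⇑f → ↑v ∈ Set.range ⇑f →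
        (G.induce Cᶜ).Reachable u v := by
  have hsc : StrongConn H := gate_strong hH
  have hne : Nonempty W := gate_nonempty hH
  constructor
  · -- atom part
    have e : H ≃g G.induce (Set.range ⇑f) := embIsoRange f
    have hscR : StrongConn (G.induce (Set.range ⇑f)) := strongConn_iso e hsc
    have hmem : Set.range ⇑f ∈
        {B : Set V | Set.range ⇑f ⊆ B ∧ (G.induce B).Connected ∧
          ¬ HasCliqueSep (G.induce B)} := by
      refine ⟨subset_rfl, ?_, hscR.noCliqueSep⟩
      haveI : Nonempty ↥(Set.range ⇑f) := by
        obtain ⟨w⟩ := hne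
        exact ⟨⟨f w, Set.mem_range_self w⟩⟩
      exact SimpleGraph.Connected.mk hscR.preconnected
    obtain ⟨A, hA, hmax⟩ := Set.Finite.exists_maximalFor id
      {B : Set V | Set.range ⇑f ⊆ B ∧ (G.induce B).Connected ∧
        ¬ HasCliqueSep (G.induce B)} (Set.toFinite _) ⟨_, hmem⟩
    refine ⟨A, ⟨hA.2.1, hA.2.2, ?_⟩, hA.1⟩
    intro B hAB hconn hnsep
    exact le_antisymm hAB (hmax ⟨hA.1.trans hAB, hconn, hnsep⟩ hAB)
  · intro C hC u v hu hv
    obtain ⟨a, ha⟩ := hu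
    obtain ⟨b, hb⟩ := hv
    have hK : H.IsClique (⇑f ⁻¹' C) := clique_preimage f hC
    have haK : a ∈ (⇑f ⁻¹' C)ᶜ := fun h => u.2 (ha ▸ h)
    have hbK : b ∈ (⇑f ⁻¹' C)ᶜ := fun h => v.2 (hb ▸ h)
    let F : (H.induce (⇑f ⁻¹' C)ᶜ) →g (G.induce Cᶜ) :=
      ⟨fun x => ⟨f x.1, x.2⟩, fun h => f.map_adj_iff.mpr h⟩
    have hr := (hsc _ hK ⟨a, haK⟩ ⟨b, hbK⟩).map F
    have h1 : F ⟨a, haK⟩ = u := Subtype.ext ha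
    have h2 : F ⟨b, hbK⟩ = v := Subtype.ext hb
    rwa [h1, h2] at hr
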